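/- Let z, x, x̃ ∈ 𝔽², a, b ∈ 𝔽 with a + b ≠ 0, φ(z,x) = a², φ(x,x̃) = b², φ(z,x̃) = (a+b)². If additionally x - z = c·(x̃ - z) with c = -a/(a+b), then a = 0. (Key case analysis in the proof of Proposition 3: the 'wrong sign' forces a = 0.) -/

import Mathlib

/-- Key case analysis in the proof of Proposition 3: under the hypotheses of
Proposition 3, the "wrong sign" `x - z = (-a/(a+b)) • (x̃ - z)` forces `a = 0`. -/
theorem stmt_18 {F : Type*} [Field F] [CharZero F]
    (φ : F × F → F × F → F)
    (hφ : ∀ p q : F × F, φ p q = (p.1 - q.1) ^ 2 + (p.2 - q.2) ^ 2)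
    (a b : F) (hab : a + b ≠ 0) (z x xt : F × F)
    (h1 : φ z x = a ^ 2) (h2 : φ x xt = b ^ 2) (h3 : φ z xt = (a + b) ^ 2)
    (hc : x - z = (-a / (a + b)) • (xt - z)) :
    a = 0 := by
  rw [hφ] at h2 h3
  have hc1 : x.1 - z.1 = (-a / (a + b)) * (xt.1 - z.1) := congrArg Prod.fst hc
  have hc2 : x.2 - z.2 = (-a / (a + b)) * (xt.2 - z.2) := congrArg Prod.snd hc
  field_simp at hc1 hc2
  have e1 : (a+b)*(x.1-xt.1) = -(2*a+b)*(xt.1-z.1) := by linear_combination hc1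
  have e2 : (a+b)*(x.2-xt.2) = -(2*a+b)*(xt.2-z.2) := by linear_combination hc2
  have sq1 := congrArg (·^2) e1
  have sq2 := congrArg (·^2) e2
  have key : (2*a+b)^2 * (a+b)^2 = b^2 * (a+b)^2 := by
    linear_combination (a+b)^2 * h2 - (2*a+b)^2 * h3 - sq1 - sq2
  have h4 : a * (a+b)^3 = 0 := by
    have h5 : (4:F) * (a * (a+b)^3) = 0 := by linear_combination key
    have : (4:F) ≠ 0 := by norm_num
    exact (mul_eq_zero.mp h5).resolve_left this
  exact (mul_eq_zero.mp h4).resolve_right (pow_ne_zero _ hab)
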